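/- Let L : ℝ^d → ℝ be differentiable and restricted L_s-smooth at sparsity level s, let S ⊆ {1,…,d} with |S| ≤ s, let θ ∈ ℝ^d with supp(θ) ⊆ S, let g ∈ ℝ^d with supp(g) ⊆ S, let η > 0, and set θ' = θ − η g. Then L(θ') − L(θ) ≤ −(η/2)(1 − η L_s) ‖g|_S‖² + (η/2) ‖g|_S − (∇L(θ))|_S‖². -/

import Mathlib

open scoped BigOperators RealInnerProductSpace

open Classical in
noncomputable def supp {d : ℕ} (x : EuclideanSpace ℝ (Fin d)) : Finset (Fin d) :=
  Finset.univ.filter fun j => x j ≠ 0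

noncomputable def norm0 {d : ℕ} (x : EuclideanSpace ℝ (Fin d)) : ℕ := (supp x).card

noncomputable def restrict {d : ℕ} (x : EuclideanSpace ℝ (Fin d)) (S : Finset (Fin d)) :
    EuclideanSpace ℝ (Fin d) := WithLp.toLp 2 fun j => if j ∈ S then x j else 0

lemma mem_supp_iff {d : ℕ} (x : EuclideanSpace ℝ (Fin d)) (j : Fin d) :
    j ∈ supp x ↔ x j ≠ 0 := by
  simp [supp]

lemma zero_of_not_mem {d : ℕ} {x : EuclideanSpace ℝ (Fin d)} {S : Finset (Fin d)}
    (hx : supp x ⊆ S) {j : Fin d} (hj : j ∉ S) : x j = 0 := by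
  by_contra hne
  exact hj (hx ((mem_supp_iff x j).2 hne))

/-- Let `L` be differentiable and restricted `L_s`-smooth at sparsity
level `s`, `|S| ≤ s`, `supp θ ⊆ S`, `supp g ⊆ S`, `η > 0`, `θ' = θ − η g`. Then
`L(θ') − L(θ) ≤ −(η/2)(1 − η L_s)‖g|_S‖² + (η/2)‖g|_S − (∇L θ)|_S‖²`. -/
theorem descent_step_bound {d s : ℕ} (L : EuclideanSpace ℝ (Fin d) → ℝ) (Ls : ℝ)
    (hdiff : Differentiable ℝ L)
    (hsmooth : ∀ θ₁ θ₂ : EuclideanSpace ℝ (Fin d), norm0 θ₁ ≤ s → norm0 θ₂ ≤ s →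
      L θ₁ ≤ L θ₂ + ⟪gradient L θ₂, θ₁ - θ₂⟫ + Ls / 2 * ‖θ₁ - θ₂‖ ^ 2)
    (S : Finset (Fin d)) (hS : S.card ≤ s)
    (θ g : EuclideanSpace ℝ (Fin d)) (hθ : supp θ ⊆ S) (hg : supp g ⊆ S)
    (η : ℝ) (hη : 0 < η) :
    L (θ - η • g) - L θ ≤ -(η / 2) * (1 - η * Ls) * ‖restrict g S‖ ^ 2
      + η / 2 * ‖restrict g S - restrict (gradient L θ) S‖ ^ 2 := by
  classical
  set h := gradient L θ with hh
  have hgS : restrict g S = g := by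
    ext j
    by_cases hj : j ∈ S
    · simp [restrict, hj]
    · simp [restrict, hj, zero_of_not_mem hg hj]
  have hsupp' : supp (θ - η • g) ⊆ S := by
    intro j hj
    rw [mem_supp_iff] at hj
    by_contra hjS
    apply hj
    have h1 : θ j = 0 := zero_of_not_mem hθ hjS
    have h2 : g j = 0 := zero_of_not_mem hg hjS
    show θ j - (η • g) j = 0
    simp [h1, h2]
  have hn1 : norm0 (θ - η • g) ≤ s := le_trans (Finset.card_le_card hsupp') hS
  have hn2 : norm0 θ ≤ s := le_trans (Finset.card_le_card hθ) hS
  have key := hsmooth (θ - η • g) θ hn1 hn2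
  have hdiffvec : θ - η • g - θ = -(η • g) := by abel
  rw [hdiffvec] at key
  have hinner1 : ⟪h, -(η • g)⟫ = -η * ⟪h, g⟫ := by
    rw [inner_neg_right, inner_smul_right]; ring
  have hnorm1 : ‖-(η • g)‖ ^ 2 = η ^ 2 * ‖g‖ ^ 2 := by
    rw [norm_neg, norm_smul]
    simp [abs_of_pos hη, mul_pow]
  rw [hinner1, hnorm1] at key
  -- relate inner products through restriction
  have hinner2 : ⟪g, restrict h S⟫ = ⟪h, g⟫ := by
    rw [real_inner_comm]
    simp only [PiLp.inner_apply, RCLike.inner_apply, conj_trivial]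
    apply Finset.sum_congr rfl
    intro j _
    by_cases hj : j ∈ S
    · simp [restrict, hj]
    · simp [restrict, hj, zero_of_not_mem hg hj]
  have hexp : ‖g - restrict h S‖ ^ 2 =
      ‖g‖ ^ 2 - 2 * ⟪g, restrict h S⟫ + ‖restrict h S‖ ^ 2 := by
    rw [norm_sub_sq_real]
  have hnn : (0:ℝ) ≤ ‖restrict h S‖ ^ 2 := by positivity
  rw [hgS, hexp, hinner2]
  nlinarith [key]
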